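/- Let Z* ∈ ℝ^{n×N} satisfy Z* Z*ᵀ = Id. There exists a constant C > 0 (depending only on dimensions) such that for every Δ ∈ ℝ^{n×N} with spectral norm ‖Δ‖₂ ≤ 1/2, setting A := Z* (Z* + Δ)ᵀ (which is invertible), one has ‖A⁻¹ (A Aᵀ)^{1/2} − Id − (1/2)(Δ Z*ᵀ − Z* Δᵀ)‖_F ≤ C ‖Δ‖_F². Equivalently, the orthogonal polar factor V Uᵀ of any full SVD A = U Σ Vᵀ equals Id + (1/2)(Δ Z*ᵀ − Z* Δᵀ) up to an error of Frobenius norm at most C ‖Δ‖_F². -/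

import Mathlib

open scoped BigOperators
open Matrix

/-- Frobenius norm of a real matrix. -/
noncomputable def frobNorm {m n : ℕ} (A : Matrix (Fin m) (Fin n) ℝ) : ℝ :=
  Real.sqrt (∑ i, ∑ j, (A i j) ^ 2)

/-- Spectral (largest singular value / ℓ2-operator) norm of a real matrix. -/
noncomputable def specNorm {m n : ℕ} (A : Matrix (Fin m) (Fin n) ℝ) : ℝ :=
  ‖LinearMap.toContinuousLinearMap (Matrix.toEuclideanLin A)‖

/-- Euclidean (ℓ2) norm of a vector. -/
noncomputable def vecNorm {n : ℕ} (v : Fin n → ℝ) : ℝ :=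
  Real.sqrt (∑ i, v i ^ 2)

/-- β(z): the smallest nonzero magnitude among the entries of `z`
(defined as `sInf` of the set of nonzero magnitudes; `0` if `z = 0`). -/
noncomputable def beta {n : ℕ} (z : Fin n → ℝ) : ℝ :=
  sInf {r : ℝ | ∃ i, z i ≠ 0 ∧ r = |z i|}

/-- `z` is an output of the hard-thresholding operator `H_s` applied to `y`:
there is a set `T` of `min s n` indices carrying largest-magnitude entries of `y`,
such that `z` agrees with `y` on `T` and vanishes off `T`. -/
def IsHardThreshold {n : ℕ} (s : ℕ) (y z : Fin n → ℝ) : Prop :=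
  ∃ T : Finset (Fin n), T.card = min s n ∧ (∀ i ∈ T, z i = y i) ∧ (∀ i ∉ T, z i = 0) ∧
    ∀ i ∈ T, ∀ j ∉ T, |y j| ≤ |y i|

/-- `A = U * S * Vᵀ` is a full singular value decomposition of `A`:
`U, V` orthogonal and `S` diagonal with nonnegative entries. -/
def IsFullSVD {n : ℕ} (A U S V : Matrix (Fin n) (Fin n) ℝ) : Prop :=
  Uᵀ * U = 1 ∧ Vᵀ * V = 1 ∧ (∀ i j, i ≠ j → S i j = 0) ∧ (∀ i, 0 ≤ S i i) ∧ A = U * S * Vᵀ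

/-- `W = V * Uᵀ` for some full SVD `A = U * S * Vᵀ`. -/
def IsPolarFromSVD {n : ℕ} (A W : Matrix (Fin n) (Fin n) ℝ) : Prop :=
  ∃ U S V, IsFullSVD A U S V ∧ W = V * Uᵀ

/-- `D_k`: the n×n diagonal matrix of ones with a zero at entry (k,k). -/
noncomputable def Dmat {n : ℕ} (k : Fin n) : Matrix (Fin n) (Fin n) ℝ :=
  Matrix.diagonal (fun i => if i = k then 0 else 1)

-- `D̃_k`: the N×N diagonal matrix with ones at the support of the k-th row of `Zs`.
open Classical in
noncomputable def Dtil {n N : ℕ} (Zs : Matrix (Fin n) (Fin N) ℝ) (k : Fin n) :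
    Matrix (Fin N) (Fin N) ℝ :=
  Matrix.diagonal (fun i => if Zs k i ≠ 0 then 1 else 0)

/-- `q = max_{1 ≤ k ≤ n} ‖D_k Z* D̃_k‖₂`. -/
noncomputable def qZero {n N : ℕ} (Zs : Matrix (Fin n) (Fin N) ℝ) : ℝ :=
  ⨆ k, specNorm (Dmat k * Zs * Dtil Zs k)

/-- Smallest singular value of an n×N matrix: `min_{‖x‖=1, x ∈ ℝⁿ} ‖Aᵀ x‖`. -/
noncomputable def sigmaMin {n N : ℕ} (A : Matrix (Fin n) (Fin N) ℝ) : ℝ :=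
  sInf {r : ℝ | ∃ x : EuclideanSpace ℝ (Fin n), ‖x‖ = 1 ∧ r = ‖Matrix.toEuclideanLin Aᵀ x‖}

/-- Condition number κ(A): ratio of largest to smallest singular value. -/
noncomputable def condNumber {n N : ℕ} (A : Matrix (Fin n) (Fin N) ℝ) : ℝ :=
  specNorm A / sigmaMin A

/-- `q = κ⁴(Z*) · max_{1 ≤ k ≤ n} ‖D_k Z* Z*ᵀ Z* D̃_k‖₂`. -/
noncomputable def qGen {n N : ℕ} (Zs : Matrix (Fin n) (Fin N) ℝ) : ℝ :=
  condNumber Zs ^ 4 * ⨆ k, specNorm (Dmat k * Zs * Zsᵀ * Zs * Dtil Zs k)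

open scoped Matrix.Norms.L2Operator RealInnerProductSpace

section Infra
variable {m n l : ℕ}

lemma specNorm_eq (A : Matrix (Fin m) (Fin n) ℝ) : specNorm A = ‖A‖ := rfl

lemma specNorm_nonneg (A : Matrix (Fin m) (Fin n) ℝ) : 0 ≤ specNorm A := norm_nonneg _

lemma spec_mulVec (A : Matrix (Fin m) (Fin n) ℝ) (x : EuclideanSpace ℝ (Fin n)) :
    ‖toEuclideanLin A x‖ ≤ specNorm A * ‖x‖ :=
  (LinearMap.toContinuousLinearMap (Matrix.toEuclideanLin A)).le_opNorm x

lemma specNorm_le_bound (A : Matrix (Fin m) (Fin n) ℝ) {c : ℝ} (hc : 0 ≤ c)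
    (h : ∀ x : EuclideanSpace ℝ (Fin n), ‖toEuclideanLin A x‖ ≤ c * ‖x‖) : specNorm A ≤ c :=
  ContinuousLinearMap.opNorm_le_bound _ hc h

lemma toEuclideanLin_one' : toEuclideanLin (1 : Matrix (Fin n) (Fin n) ℝ) = LinearMap.id := by
  ext x
  simp [toEuclideanLin_apply]

lemma toEuclideanLin_mul' (A : Matrix (Fin m) (Fin n) ℝ) (B : Matrix (Fin n) (Fin l) ℝ)
    (x : EuclideanSpace ℝ (Fin l)) :
    toEuclideanLin (A * B) x = toEuclideanLin A (toEuclideanLin B x) := by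
  simp [toEuclideanLin_apply, mulVec_mulVec]

lemma specNorm_one_le : specNorm (1 : Matrix (Fin n) (Fin n) ℝ) ≤ 1 := by
  apply specNorm_le_bound _ zero_le_one
  intro x
  rw [one_mul, toEuclideanLin_one']
  simp

lemma conjT_eq (A : Matrix (Fin m) (Fin n) ℝ) : Aᴴ = Aᵀ := by
  ext i j; simp [conjTranspose_apply]

lemma specNorm_transpose (A : Matrix (Fin m) (Fin n) ℝ) : specNorm Aᵀ = specNorm A := by
  rw [specNorm_eq, specNorm_eq, ← conjT_eq, Matrix.l2_opNorm_conjTranspose]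

lemma specNorm_mul_le (A : Matrix (Fin m) (Fin n) ℝ) (B : Matrix (Fin n) (Fin l) ℝ) :
    specNorm (A * B) ≤ specNorm A * specNorm B := by
  rw [specNorm_eq, specNorm_eq, specNorm_eq]; exact Matrix.l2_opNorm_mul A B

lemma specNorm_cstar (A : Matrix (Fin m) (Fin n) ℝ) :
    specNorm (Aᵀ * A) = specNorm A * specNorm A := by
  rw [specNorm_eq, specNorm_eq, ← conjT_eq, Matrix.l2_opNorm_conjTranspose_mul_self]

lemma specNorm_add_le (A B : Matrix (Fin m) (Fin n) ℝ) :
    specNorm (A + B) ≤ specNorm A + specNorm B := by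
  rw [specNorm_eq, specNorm_eq, specNorm_eq]; exact norm_add_le _ _

lemma specNorm_sub_le (A B : Matrix (Fin m) (Fin n) ℝ) :
    specNorm (A - B) ≤ specNorm A + specNorm B := by
  rw [specNorm_eq, specNorm_eq, specNorm_eq]; exact norm_sub_le _ _

lemma frobNorm_nonneg (A : Matrix (Fin m) (Fin n) ℝ) : 0 ≤ frobNorm A :=
  Real.sqrt_nonneg _

lemma frobNorm_eq_norm (A : Matrix (Fin m) (Fin n) ℝ) :
    frobNorm A = ‖((WithLp.equiv 2 (Fin m × Fin n → ℝ)).symm (fun p => A p.1 p.2) :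
      EuclideanSpace ℝ (Fin m × Fin n))‖ := by
  rw [EuclideanSpace.norm_eq, frobNorm]
  congr 1
  rw [Fintype.sum_prod_type]
  simp [Real.norm_eq_abs, sq_abs]

lemma frobNorm_add_le (A B : Matrix (Fin m) (Fin n) ℝ) :
    frobNorm (A + B) ≤ frobNorm A + frobNorm B := by
  rw [frobNorm_eq_norm, frobNorm_eq_norm, frobNorm_eq_norm]
  have : ((WithLp.equiv 2 (Fin m × Fin n → ℝ)).symm (fun p => (A + B) p.1 p.2) :
      EuclideanSpace ℝ (Fin m × Fin n)) =
      (WithLp.equiv 2 (Fin m × Fin n → ℝ)).symm (fun p => A p.1 p.2) +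
      (WithLp.equiv 2 (Fin m × Fin n → ℝ)).symm (fun p => B p.1 p.2) := rfl
  rw [this]
  exact norm_add_le _ _

lemma frobNorm_sub_le (A B : Matrix (Fin m) (Fin n) ℝ) :
    frobNorm (A - B) ≤ frobNorm A + frobNorm B := by
  rw [frobNorm_eq_norm, frobNorm_eq_norm, frobNorm_eq_norm]
  have : ((WithLp.equiv 2 (Fin m × Fin n → ℝ)).symm (fun p => (A - B) p.1 p.2) :
      EuclideanSpace ℝ (Fin m × Fin n)) =
      (WithLp.equiv 2 (Fin m × Fin n → ℝ)).symm (fun p => A p.1 p.2) -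
      (WithLp.equiv 2 (Fin m × Fin n → ℝ)).symm (fun p => B p.1 p.2) := rfl
  rw [this]
  exact norm_sub_le _ _

lemma frobNorm_smul (c : ℝ) (A : Matrix (Fin m) (Fin n) ℝ) :
    frobNorm (c • A) = |c| * frobNorm A := by
  rw [frobNorm_eq_norm, frobNorm_eq_norm A]
  have : ((WithLp.equiv 2 (Fin m × Fin n → ℝ)).symm (fun p => (c • A) p.1 p.2) :
      EuclideanSpace ℝ (Fin m × Fin n)) =
      c • (WithLp.equiv 2 (Fin m × Fin n → ℝ)).symm (fun p => A p.1 p.2) := rfl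
  rw [this, norm_smul, Real.norm_eq_abs]

lemma frobNorm_transpose (A : Matrix (Fin m) (Fin n) ℝ) : frobNorm Aᵀ = frobNorm A := by
  rw [frobNorm, frobNorm, Finset.sum_comm]
  rfl

noncomputable def colE (A : Matrix (Fin m) (Fin n) ℝ) (j : Fin n) :
    EuclideanSpace ℝ (Fin m) := (WithLp.equiv 2 (Fin m → ℝ)).symm (fun i => A i j)

lemma frobNorm_sq_cols (A : Matrix (Fin m) (Fin n) ℝ) :
    frobNorm A ^ 2 = ∑ j, ‖colE A j‖ ^ 2 := by
  rw [frobNorm, Real.sq_sqrt (by positivity), Finset.sum_comm]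
  refine Finset.sum_congr rfl fun j _ => ?_
  rw [EuclideanSpace.norm_eq, Real.sq_sqrt (by positivity)]
  simp [colE, Real.norm_eq_abs, sq_abs]

lemma colE_mul (A : Matrix (Fin m) (Fin n) ℝ) (B : Matrix (Fin n) (Fin l) ℝ)
    (j : Fin l) : colE (A * B) j = toEuclideanLin A (colE B j) := by
  simp only [colE, WithLp.equiv_symm_apply, toEuclideanLin_apply_piLp_toLp]
  congr 1

lemma frobNorm_mul_le (A : Matrix (Fin m) (Fin n) ℝ) (B : Matrix (Fin n) (Fin l) ℝ) :
    frobNorm (A * B) ≤ specNorm A * frobNorm B := by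
  have hsq : frobNorm (A * B) ^ 2 ≤ (specNorm A * frobNorm B) ^ 2 := by
    rw [frobNorm_sq_cols, mul_pow, frobNorm_sq_cols, Finset.mul_sum]
    refine Finset.sum_le_sum fun j _ => ?_
    rw [colE_mul, ← mul_pow]
    have h1 := spec_mulVec A (colE B j)
    have h2 : (0:ℝ) ≤ ‖toEuclideanLin A (colE B j)‖ := norm_nonneg _
    nlinarith [norm_nonneg (colE B j),
      norm_nonneg (LinearMap.toContinuousLinearMap (Matrix.toEuclideanLin A))]
  have h1 : (0:ℝ) ≤ frobNorm (A*B) := Real.sqrt_nonneg _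
  have h2 : (0:ℝ) ≤ specNorm A * frobNorm B :=
    mul_nonneg (norm_nonneg _) (Real.sqrt_nonneg _)
  nlinarith

lemma specNorm_le_frobNorm (A : Matrix (Fin m) (Fin n) ℝ) :
    specNorm A ≤ frobNorm A := by
  apply ContinuousLinearMap.opNorm_le_bound _ (Real.sqrt_nonneg _)
  intro x
  have hx : ‖x‖ = Real.sqrt (∑ j, x j ^ 2) := by
    rw [EuclideanSpace.norm_eq]; simp [Real.norm_eq_abs, sq_abs]
  have hAx : ‖LinearMap.toContinuousLinearMap (toEuclideanLin A) x‖ ^ 2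
      = ∑ i, (∑ j, A i j * x j) ^ 2 := by
    rw [EuclideanSpace.norm_eq, Real.sq_sqrt (by positivity)]
    refine Finset.sum_congr rfl fun i _ => ?_
    simp only [Real.norm_eq_abs, sq_abs]
    congr 1
  have hCS : ∀ i, (∑ j, A i j * x j) ^ 2 ≤ (∑ j, A i j ^ 2) * (∑ j, x j ^ 2) :=
    fun i => Finset.sum_mul_sq_le_sq_mul_sq _ _ _
  have key : ‖LinearMap.toContinuousLinearMap (toEuclideanLin A) x‖ ^ 2 ≤
      (frobNorm A * ‖x‖) ^ 2 := by
    rw [hAx, mul_pow, frobNorm, Real.sq_sqrt (by positivity), hx,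
      Real.sq_sqrt (by positivity), Finset.sum_mul]
    exact Finset.sum_le_sum fun i _ => hCS i
  have h1 := norm_nonneg (LinearMap.toContinuousLinearMap (toEuclideanLin A) x)
  have h2 : (0:ℝ) ≤ frobNorm A * ‖x‖ := mul_nonneg (Real.sqrt_nonneg _) (norm_nonneg _)
  show ‖LinearMap.toContinuousLinearMap (toEuclideanLin A) x‖ ≤ frobNorm A * ‖x‖
  nlinarith

lemma psd_inner_nonneg {S : Matrix (Fin n) (Fin n) ℝ} (hS : S.PosSemidef)
    (x : EuclideanSpace ℝ (Fin n)) : 0 ≤ ⟪toEuclideanLin S x, x⟫ := by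
  have h := hS.dotProduct_mulVec_nonneg ((WithLp.equiv 2 (Fin n → ℝ)) x)
  simp only [star_trivial, dotProduct] at h
  rw [PiLp.inner_apply]
  simp only [RCLike.inner_apply, starRingEnd_apply, star_trivial]
  calc (0:ℝ) ≤ ∑ i, (WithLp.equiv 2 (Fin n → ℝ)) x i * (S *ᵥ (WithLp.equiv 2 (Fin n → ℝ)) x) i := h
    _ = _ := by
        refine Finset.sum_congr rfl fun i _ => ?_
        rfl

open scoped MatrixOrder in
lemma psd_rayleigh {S : Matrix (Fin n) (Fin n) ℝ} (hS : S.PosSemidef)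
    (x : EuclideanSpace ℝ (Fin n)) :
    ‖toEuclideanLin S x‖ ^ 2 ≤ specNorm S * ⟪toEuclideanLin S x, x⟫ := by
  set R := CFC.sqrt S with hRdef
  have hRS : R * R = S := CFC.sqrt_mul_sqrt_self S hS.nonneg
  have hRpsd : R.PosSemidef := (CFC.sqrt_nonneg S).posSemidef
  have hRsymm : (toEuclideanLin R).IsSymmetric := by
    rw [← isHermitian_iff_isSymmetric]; exact hRpsd.1
  set y := toEuclideanLin R x with hy
  have hSx : toEuclideanLin S x = toEuclideanLin R y := by
    rw [← hRS, toEuclideanLin_mul']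
  have hinner : ⟪toEuclideanLin S x, x⟫ = ‖y‖ ^ 2 := by
    rw [hSx, hRsymm y x, ← hy, real_inner_self_eq_norm_sq]
  have hRnorm : specNorm R * specNorm R = specNorm S := by
    have : Rᵀ = R := by rw [← conjT_eq]; exact hRpsd.1
    rw [← specNorm_cstar R, this, hRS]
  have h1 : ‖toEuclideanLin S x‖ ≤ specNorm R * ‖y‖ := by rw [hSx]; exact spec_mulVec R y
  have h0 : (0:ℝ) ≤ ‖toEuclideanLin S x‖ := norm_nonneg _
  rw [hinner]
  nlinarith [norm_nonneg y, norm_nonneg (LinearMap.toContinuousLinearMap (toEuclideanLin R))]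

lemma psd_sub_one_bound {S : Matrix (Fin n) (Fin n) ℝ} (hS : S.PosSemidef)
    (hSnorm : specNorm S ≤ 3/2) : specNorm (S - 1) ≤ 1 := by
  apply specNorm_le_bound _ zero_le_one
  intro x
  have hsub : toEuclideanLin (S - 1) x = toEuclideanLin S x - x := by
    rw [map_sub, LinearMap.sub_apply, toEuclideanLin_one']
    rfl
  rw [hsub, one_mul]
  have hray := psd_rayleigh hS x
  have hip := psd_inner_nonneg hS x
  have hray' : ‖toEuclideanLin S x‖ ^ 2 ≤ (3/2) * ⟪toEuclideanLin S x, x⟫ := by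
    nlinarith [norm_nonneg (toEuclideanLin S x)]
  have hexp : ‖toEuclideanLin S x - x‖ ^ 2 =
      ‖toEuclideanLin S x‖ ^ 2 - 2 * ⟪toEuclideanLin S x, x⟫ + ‖x‖ ^ 2 :=
    norm_sub_sq_real _ _
  have h0 : (0:ℝ) ≤ ‖toEuclideanLin S x - x‖ := norm_nonneg _
  nlinarith [norm_nonneg x]

end Infra

set_option maxHeartbeats 1000000 in
lemma polar_est {n : ℕ} (E S : Matrix (Fin n) (Fin n) ℝ) (hE : specNorm E ≤ 1/2)
    (hS : S.PosSemidef) (hdet : IsUnit (1 + E : Matrix (Fin n) (Fin n) ℝ).det)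
    (hsq : S * S = (1 + E) * (1 + E)ᵀ) :
    frobNorm ((1 + E)⁻¹ * S - 1 - (1/2 : ℝ) • (Eᵀ - E)) ≤ 12 * (specNorm E * frobNorm E) := by
  have he0 : (0:ℝ) ≤ specNorm E := specNorm_nonneg E
  have hfE0 : (0:ℝ) ≤ frobNorm E := frobNorm_nonneg E
  -- spectral norm of A = 1 + E
  have hA32 : specNorm (1 + E) ≤ 3/2 := by
    have := specNorm_add_le (1 : Matrix (Fin n) (Fin n) ℝ) E
    have := specNorm_one_le (n := n)
    linarith
  have hAAT : specNorm ((1+E) * (1+E)ᵀ) ≤ 9/4 := by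
    have h1 := specNorm_mul_le (1+E) (1+E)ᵀ
    rw [specNorm_transpose] at h1
    nlinarith [specNorm_nonneg (1+E)]
  have hSn : specNorm S ≤ 3/2 := by
    have hc := specNorm_cstar S
    have hST : Sᵀ = S := by rw [← conjT_eq]; exact hS.1
    rw [hST, hsq] at hc
    nlinarith [specNorm_nonneg S]
  have ht1 : specNorm (S - 1) ≤ 1 := psd_sub_one_bound hS hSn
  set H := S - 1 with hHdef
  set B := E + Eᵀ + E * Eᵀ with hBdef
  have hsq' : S * S = 1 + B := by
    rw [hsq, transpose_add, transpose_one, hBdef]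
    noncomm_ring
  have hkey : H + H = B - H * H := by
    have h1 : H * H = S * S - S - S + 1 := by rw [hHdef]; noncomm_ring
    rw [h1, hsq', hHdef]
    abel
  -- spectral bound on H
  have heT : specNorm Eᵀ = specNorm E := specNorm_transpose E
  have htB : specNorm B ≤ 5/2 * specNorm E := by
    have h1 := specNorm_add_le (E + Eᵀ) (E * Eᵀ)
    have h2 := specNorm_add_le E Eᵀ
    have h3 := specNorm_mul_le E Eᵀ
    rw [heT] at h2 h3
    rw [hBdef]
    nlinarith
  have h2t : 2 * specNorm H ≤ specNorm B + specNorm H * specNorm H := by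
    have hHH : (2:ℝ) • H = H + H := two_smul ℝ H
    have e1 : specNorm ((2:ℝ) • H) = 2 * specNorm H := by
      rw [specNorm_eq, specNorm_eq, norm_smul, Real.norm_eq_abs]
      norm_num
    have e2 := specNorm_sub_le B (H * H)
    have e3 := specNorm_mul_le H H
    rw [hHH, hkey] at e1
    linarith
  have htH : specNorm H ≤ 5/2 * specNorm E := by
    nlinarith [specNorm_nonneg H]
  -- Frobenius bounds
  have hfeT : frobNorm Eᵀ = frobNorm E := frobNorm_transpose E
  have hfB : frobNorm B ≤ 5/2 * frobNorm E := by
    have h1 := frobNorm_add_le (E + Eᵀ) (E * Eᵀ)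
    have h2 := frobNorm_add_le E Eᵀ
    have h3 := frobNorm_mul_le E Eᵀ
    rw [hfeT] at h2 h3
    rw [hBdef]
    nlinarith
  have hfH : frobNorm H ≤ 10/3 * frobNorm E := by
    have hHH : (2:ℝ) • H = H + H := two_smul ℝ H
    have e1 : frobNorm ((2:ℝ) • H) = 2 * frobNorm H := by
      rw [frobNorm_smul]; norm_num
    rw [hHH, hkey] at e1
    have e2 := frobNorm_sub_le B (H * H)
    have e3 := frobNorm_mul_le H H
    have e4 : specNorm H * frobNorm H ≤ 5/4 * frobNorm H := by
      have := frobNorm_nonneg H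
      nlinarith
    linarith
  -- X₀ bound
  set X₀ := H - (1/2 : ℝ) • (E + Eᵀ) with hX0def
  have hX0eq : X₀ = (1/2 : ℝ) • (E * Eᵀ - H * H) := by
    have h2 : X₀ + X₀ = (H + H) - (E + Eᵀ) := by rw [hX0def]; module
    rw [hkey, hBdef] at h2
    have h3 : X₀ + X₀ = E * Eᵀ - H * H := by rw [h2]; abel
    have h4 : X₀ = (1/2 : ℝ) • (X₀ + X₀) := by module
    rw [h4, h3]
  have hfX0 : frobNorm X₀ ≤ 14/3 * (specNorm E * frobNorm E) := by
    rw [hX0eq, frobNorm_smul]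
    have h1 := frobNorm_sub_le (E * Eᵀ) (H * H)
    have h2 := frobNorm_mul_le E Eᵀ
    have h3 := frobNorm_mul_le H H
    rw [hfeT] at h2
    have h4 : specNorm H * frobNorm H ≤ (5/2 * specNorm E) * (10/3 * frobNorm E) := by
      apply mul_le_mul htH hfH (frobNorm_nonneg H) (by linarith)
    rw [abs_of_pos (by norm_num : (0:ℝ) < 1/2)]
    nlinarith
  -- spectral bound on A⁻¹
  have hAinv : specNorm ((1+E)⁻¹) ≤ 2 := by
    apply specNorm_le_bound _ (by norm_num)
    intro y
    set z := toEuclideanLin (1+E)⁻¹ y with hzdef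
    have h1 : toEuclideanLin ((1+E) * (1+E)⁻¹) y = y := by
      rw [Matrix.mul_nonsing_inv _ hdet, toEuclideanLin_one']
      rfl
    have h2 : z + toEuclideanLin E z = y := by
      rw [← h1, toEuclideanLin_mul', map_add, LinearMap.add_apply, toEuclideanLin_one']
      rfl
    have h3 : z = y - toEuclideanLin E z := by rw [← h2]; abel
    have h4 : ‖z‖ ≤ ‖y‖ + ‖toEuclideanLin E z‖ := by
      have := norm_sub_le y (toEuclideanLin E z)
      rw [← h3] at this
      exact this
    have h5 : ‖toEuclideanLin E z‖ ≤ specNorm E * ‖z‖ := spec_mulVec E z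
    have h6 : specNorm E * ‖z‖ ≤ 1/2 * ‖z‖ := by
      apply mul_le_mul_of_nonneg_right hE (norm_nonneg z)
    linarith
  -- final
  set X := (1+E)⁻¹ * S - 1 - (1/2 : ℝ) • (Eᵀ - E) with hXdef
  have hAX : (1+E) * X = X₀ - (1/2 : ℝ) • (E * (Eᵀ - E)) := by
    have hS' : (1+E) * ((1+E)⁻¹ * S) = S := by
      rw [← Matrix.mul_assoc, Matrix.mul_nonsing_inv _ hdet, one_mul]
    rw [hXdef, Matrix.mul_sub, Matrix.mul_sub, hS', Matrix.mul_one, Matrix.mul_smul]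
    have hexp : (1+E) * (Eᵀ - E) = (Eᵀ - E) + E * (Eᵀ - E) := by noncomm_ring
    rw [hexp, hX0def, hHdef]
    module
  have hfAX : frobNorm ((1+E) * X) ≤ 17/3 * (specNorm E * frobNorm E) := by
    rw [hAX]
    have h1 := frobNorm_sub_le X₀ ((1/2 : ℝ) • (E * (Eᵀ - E)))
    rw [frobNorm_smul, abs_of_pos (by norm_num : (0:ℝ) < 1/2)] at h1
    have h2 := frobNorm_mul_le E (Eᵀ - E)
    have h3 := frobNorm_sub_le Eᵀ E
    rw [hfeT] at h3
    have h4 : frobNorm (E * (Eᵀ - E)) ≤ specNorm E * (2 * frobNorm E) := by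
      calc frobNorm (E * (Eᵀ - E)) ≤ specNorm E * frobNorm (Eᵀ - E) := h2
        _ ≤ specNorm E * (2 * frobNorm E) := by
            apply mul_le_mul_of_nonneg_left (by linarith) he0
    nlinarith [frobNorm_nonneg (E * (Eᵀ - E))]
  have hXeq : X = (1+E)⁻¹ * ((1+E) * X) := by
    rw [← Matrix.mul_assoc, Matrix.nonsing_inv_mul _ hdet, one_mul]
  calc frobNorm X = frobNorm ((1+E)⁻¹ * ((1+E) * X)) := by rw [← hXeq]
    _ ≤ specNorm ((1+E)⁻¹) * frobNorm ((1+E) * X) := frobNorm_mul_le _ _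
    _ ≤ 12 * (specNorm E * frobNorm E) := by
        nlinarith [frobNorm_nonneg ((1+E) * X), specNorm_nonneg ((1+E)⁻¹),
          mul_le_mul hAinv hfAX (frobNorm_nonneg _) (by norm_num : (0:ℝ) ≤ 2)]


set_option maxHeartbeats 1000000 in
/-- first-order expansion of the orthogonal polar factor of
`A = Z* (Z* + Δ)ᵀ` around the identity: `A⁻¹ (A Aᵀ)^{1/2} ≈ Id + (1/2)(Δ Z*ᵀ − Z* Δᵀ)`. -/
theorem stmt10
    {n N : ℕ} (Zs : Matrix (Fin n) (Fin N) ℝ)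
    (hZ : Zs * Zsᵀ = 1) :
    ∃ C : ℝ, 0 < C ∧ ∀ Δ : Matrix (Fin n) (Fin N) ℝ, specNorm Δ ≤ 1/2 →
      IsUnit (Zs * (Zs + Δ)ᵀ) ∧
      (∀ S : Matrix (Fin n) (Fin n) ℝ, S.PosSemidef →
        S * S = (Zs * (Zs + Δ)ᵀ) * (Zs * (Zs + Δ)ᵀ)ᵀ →
        frobNorm ((Zs * (Zs + Δ)ᵀ)⁻¹ * S - 1 - (1/2 : ℝ) • (Δ * Zsᵀ - Zs * Δᵀ)) ≤
          C * frobNorm Δ ^ 2) ∧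
      (∀ U S V : Matrix (Fin n) (Fin n) ℝ, IsFullSVD (Zs * (Zs + Δ)ᵀ) U S V →
        frobNorm (V * Uᵀ - 1 - (1/2 : ℝ) • (Δ * Zsᵀ - Zs * Δᵀ)) ≤
          C * frobNorm Δ ^ 2) := by
  classical
  refine ⟨12, by norm_num, fun Δ hΔ => ?_⟩
  set E := Zs * Δᵀ with hEdef
  have hA : Zs * (Zs + Δ)ᵀ = 1 + E := by rw [transpose_add, Matrix.mul_add, hZ]
  -- spectral norm of Zs
  have hZs1 : specNorm Zs ≤ 1 := by
    have h1 : specNorm (Zs * Zsᵀ) = specNorm Zsᵀ * specNorm Zsᵀ := by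
      have := specNorm_cstar Zsᵀ
      rwa [transpose_transpose] at this
    rw [hZ] at h1
    have h2 : specNorm (1 : Matrix (Fin n) (Fin n) ℝ) ≤ 1 := specNorm_one_le
    have h3 : specNorm Zsᵀ ≤ 1 := by nlinarith [specNorm_nonneg Zsᵀ]
    rw [← specNorm_transpose]
    exact h3
  have hEspec : specNorm E ≤ specNorm Δ := by
    have h1 := specNorm_mul_le Zs Δᵀ
    rw [specNorm_transpose] at h1
    calc specNorm E ≤ specNorm Zs * specNorm Δ := h1
      _ ≤ 1 * specNorm Δ := by
          apply mul_le_mul_of_nonneg_right hZs1 (specNorm_nonneg Δ)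
      _ = specNorm Δ := one_mul _
  have hE12 : specNorm E ≤ 1/2 := le_trans hEspec hΔ
  have hEfrob : frobNorm E ≤ frobNorm Δ := by
    have h1 := frobNorm_mul_le Zs Δᵀ
    rw [frobNorm_transpose] at h1
    calc frobNorm E ≤ specNorm Zs * frobNorm Δ := h1
      _ ≤ 1 * frobNorm Δ := by
          apply mul_le_mul_of_nonneg_right hZs1 (frobNorm_nonneg Δ)
      _ = frobNorm Δ := one_mul _
  -- invertibility
  have hnormE : ‖(-E : Matrix (Fin n) (Fin n) ℝ)‖ < 1 := by
    rw [norm_neg, ← specNorm_eq]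
    linarith
  have hunit : IsUnit (1 + E : Matrix (Fin n) (Fin n) ℝ) := by
    have h := isUnit_one_sub_of_norm_lt_one hnormE
    rwa [sub_neg_eq_add] at h
  have hdet : IsUnit (1 + E : Matrix (Fin n) (Fin n) ℝ).det :=
    (Matrix.isUnit_iff_isUnit_det _).mp hunit
  have hEt : Eᵀ = Δ * Zsᵀ := by rw [hEdef, transpose_mul, transpose_transpose]
  have hbound : 12 * (specNorm E * frobNorm E) ≤ 12 * frobNorm Δ ^ 2 := by
    have h1 : specNorm E ≤ frobNorm Δ := le_trans hEspec (specNorm_le_frobNorm Δ)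
    have h2 : specNorm E * frobNorm E ≤ frobNorm Δ * frobNorm Δ :=
      mul_le_mul h1 hEfrob (frobNorm_nonneg E) (le_trans (frobNorm_nonneg Δ) (le_refl _))
    nlinarith
  have main : ∀ S : Matrix (Fin n) (Fin n) ℝ, S.PosSemidef →
      S * S = (Zs * (Zs + Δ)ᵀ) * (Zs * (Zs + Δ)ᵀ)ᵀ →
      frobNorm ((Zs * (Zs + Δ)ᵀ)⁻¹ * S - 1 - (1/2 : ℝ) • (Δ * Zsᵀ - Zs * Δᵀ)) ≤
        12 * frobNorm Δ ^ 2 := by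
    intro S hS hSS
    rw [hA] at hSS
    rw [hA, ← hEt, ← hEdef]
    calc frobNorm ((1 + E)⁻¹ * S - 1 - (1/2 : ℝ) • (Eᵀ - E))
        ≤ 12 * (specNorm E * frobNorm E) := polar_est E S hE12 hS hdet hSS
      _ ≤ 12 * frobNorm Δ ^ 2 := hbound
  refine ⟨by rw [hA]; exact hunit, main, ?_⟩
  rintro U S V ⟨hU, hV, hSoff, hSnn, hAeq⟩
  have hSdiag : S = Matrix.diagonal (fun i => S i i) := by
    ext i j
    by_cases h : i = j
    · subst h; simp
    · rw [Matrix.diagonal_apply_ne _ h]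
      exact hSoff i j h
  have hST : Sᵀ = S := by
    conv_lhs => rw [hSdiag]
    rw [Matrix.diagonal_transpose, ← hSdiag]
  have hpsd' : (U * S * Uᵀ).PosSemidef := by
    have hd : (Matrix.diagonal (fun i => S i i)).PosSemidef :=
      Matrix.posSemidef_diagonal_iff.mpr fun i => hSnn i
    have h2 := hd.mul_mul_conjTranspose_same U
    rw [conjT_eq] at h2
    rw [hSdiag]
    exact h2
  have hsq' : (U * S * Uᵀ) * (U * S * Uᵀ) = (Zs * (Zs + Δ)ᵀ) * (Zs * (Zs + Δ)ᵀ)ᵀ := by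
    have e1 : (U * S * Uᵀ) * (U * S * Uᵀ) = U * S * ((Uᵀ * U) * S) * Uᵀ := by
      noncomm_ring
    rw [hU, one_mul] at e1
    have e2 : (Zs * (Zs + Δ)ᵀ) * (Zs * (Zs + Δ)ᵀ)ᵀ = U * S * ((Vᵀ * V) * Sᵀ) * Uᵀ := by
      rw [hAeq, transpose_mul, transpose_mul, transpose_transpose]
      noncomm_ring
    rw [hV, one_mul, hST] at e2
    rw [e1, e2]
  have hAVU : (Zs * (Zs + Δ)ᵀ) * (V * Uᵀ) = U * S * Uᵀ := by
    rw [hAeq]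
    have : U * S * Vᵀ * (V * Uᵀ) = U * S * (Vᵀ * V) * Uᵀ := by noncomm_ring
    rw [this, hV, mul_one]
  have hdet' : IsUnit (Zs * (Zs + Δ)ᵀ).det := by
    rw [hA]; exact hdet
  have hVU : V * Uᵀ = (Zs * (Zs + Δ)ᵀ)⁻¹ * (U * S * Uᵀ) := by
    rw [← hAVU, ← Matrix.mul_assoc, Matrix.nonsing_inv_mul _ hdet', one_mul]
  rw [hVU]
  exact main (U * S * Uᵀ) hpsd' hsq'
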